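/- Let f be an analytic vector field on ℝ^d with f(0) = 0 which is globally asymptotically stable at the origin, and let V(x) = xᵀPx with P symmetric positive definite be a weak Lyapunov function for f, i.e. dV(x)·f(x) ≤ 0 for all x ∈ ℝ^d. Then V is strictly decreasing along every nonzero solution of ẋ = f(x): for every x ≠ 0 and every 0 ≤ s < t, V(Φ^t(x)) < V(Φ^s(x)), where Φ^t denotes the flow of f. -/

import Mathlib

set_option maxHeartbeats 1600000

open Filter Set Topology Matrix

noncomputable section Aux

open Metric intervalIntegral MeasureTheory Interval

namespace WeakLyap

variable {d : ℕ}

def jC (d : ℕ) : (Fin d → ℝ) →L[ℝ] (Fin d → ℂ) :=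
  ContinuousLinearMap.pi fun i => Complex.ofRealCLM.comp (ContinuousLinearMap.proj i)

def reC (d : ℕ) : (Fin d → ℂ) →L[ℝ] (Fin d → ℝ) :=
  ContinuousLinearMap.pi fun i => Complex.reCLM.comp (ContinuousLinearMap.proj i)

@[simp] lemma jC_apply (x : Fin d → ℝ) (i : Fin d) : jC d x i = (x i : ℂ) := rfl
@[simp] lemma reC_apply (z : Fin d → ℂ) (i : Fin d) : reC d z i = (z i).re := rfl
@[simp] lemma reC_jC (x : Fin d → ℝ) : reC d (jC d x) = x := by funext i; simp

lemma norm_jC (x : Fin d → ℝ) : ‖jC d x‖ = ‖x‖ := by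
  show ‖(fun i => (x i : ℂ))‖ = ‖x‖
  simp [Pi.norm_def, Complex.nnnorm_real]

/-- complexification of a continuous multilinear map on (ℝ^d)^n -/
def lift (n : ℕ) (p : ContinuousMultilinearMap ℝ (fun _ : Fin n => (Fin d → ℝ)) (Fin d → ℝ)) :
    ContinuousMultilinearMap ℂ (fun _ : Fin n => (Fin d → ℂ)) (Fin d → ℂ) :=
  ∑ k : Fin n → Fin d,
    (ContinuousMultilinearMap.mkPiRing ℂ (Fin n)
        (jC d (p fun i => Pi.single (k i) 1))).compContinuousLinearMap
      fun i => ContinuousLinearMap.proj (k i)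

lemma lift_apply (n : ℕ) (p : ContinuousMultilinearMap ℝ (fun _ : Fin n => (Fin d → ℝ)) (Fin d → ℝ))
    (z : Fin n → (Fin d → ℂ)) :
    lift n p z = ∑ k : Fin n → Fin d, (∏ i, z i (k i)) • jC d (p fun i => Pi.single (k i) 1) := by
  simp [lift, ContinuousMultilinearMap.sum_apply]

lemma expansion (n : ℕ) (p : ContinuousMultilinearMap ℝ (fun _ : Fin n => (Fin d → ℝ)) (Fin d → ℝ))
    (x : Fin n → (Fin d → ℝ)) :
    p x = ∑ k : Fin n → Fin d, (∏ i, x i (k i)) • (p fun i => Pi.single (k i) 1) := by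
  have hx : x = fun i => ∑ j : Fin d, (x i j) • (Pi.single j 1 : Fin d → ℝ) := by
    funext i j
    simp [Finset.sum_apply, Pi.single_apply]
  conv_lhs => rw [hx]
  have := p.toMultilinearMap.map_sum (g := fun i j => (x i j) • (Pi.single j 1 : Fin d → ℝ))
  rw [show (p fun i => ∑ j : Fin d, x i j • (Pi.single j 1 : Fin d → ℝ))
      = p.toMultilinearMap fun i => ∑ j : Fin d, x i j • (Pi.single j 1 : Fin d → ℝ) from rfl,
    this]
  congr 1
  funext k
  rw [p.toMultilinearMap.map_smul_univ]
  rfl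

lemma lift_agree (n : ℕ) (p : ContinuousMultilinearMap ℝ (fun _ : Fin n => (Fin d → ℝ)) (Fin d → ℝ))
    (x : Fin n → (Fin d → ℝ)) :
    lift n p (fun i => jC d (x i)) = jC d (p x) := by
  rw [lift_apply, expansion n p x]
  rw [map_sum]
  congr 1
  funext k
  simp only [jC_apply, ← Complex.ofReal_prod, Complex.coe_smul, _root_.map_smul]

lemma lift_norm_le (n : ℕ)
    (p : ContinuousMultilinearMap ℝ (fun _ : Fin n => (Fin d → ℝ)) (Fin d → ℝ)) :
    ‖lift n p‖ ≤ (d:ℝ)^n * ‖p‖ := by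
  apply ContinuousMultilinearMap.opNorm_le_bound
  · positivity
  intro z
  rw [lift_apply]
  refine (norm_sum_le _ _).trans ?_
  have hterm : ∀ k : Fin n → Fin d,
      ‖(∏ i, z i (k i)) • jC d (p fun i => Pi.single (k i) 1)‖ ≤ ‖p‖ * ∏ i, ‖z i‖ := by
    intro k
    rw [norm_smul, norm_jC, norm_prod]
    have h1 : ∏ i, ‖z i (k i)‖ ≤ ∏ i, ‖z i‖ :=
      Finset.prod_le_prod (fun i _ => norm_nonneg _) (fun i _ => norm_le_pi_norm (z i) (k i))
    have h2 : ‖p fun i => Pi.single (k i) 1‖ ≤ ‖p‖ := by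
      refine (p.le_opNorm _).trans ?_
      have : ∏ i : Fin n, ‖(Pi.single (k i) 1 : Fin d → ℝ)‖ = 1 := by
        simp [Pi.norm_single]
      rw [this, mul_one]
    calc (∏ i, ‖z i (k i)‖) * ‖p fun i => Pi.single (k i) 1‖
        ≤ (∏ i, ‖z i‖) * ‖p‖ := by
          apply mul_le_mul h1 h2 (norm_nonneg _) (Finset.prod_nonneg fun i _ => norm_nonneg _)
      _ = ‖p‖ * ∏ i, ‖z i‖ := mul_comm _ _
  refine (Finset.sum_le_sum fun k _ => hterm k).trans ?_
  rw [Finset.sum_const]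
  simp only [Finset.card_univ, Fintype.card_fun, Fintype.card_fin, nsmul_eq_mul]
  push_cast
  rw [mul_assoc]
lemma exists_complexification (hd : 0 < d) (f : (Fin d → ℝ) → (Fin d → ℝ)) (y₀ : Fin d → ℝ)
    (hf : AnalyticAt ℝ f y₀) :
    ∃ ρ > (0:ℝ), ∃ F : (Fin d → ℂ) → (Fin d → ℂ),
      AnalyticOnNhd ℂ F (ball (jC d y₀) ρ) ∧
      ∀ x : Fin d → ℝ, ‖x - y₀‖ < ρ → F (jC d x) = jC d (f x) := by
  obtain ⟨p, r, hpb⟩ : ∃ p r, HasFPowerSeriesOnBall f p y₀ r := by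
    obtain ⟨p, hp⟩ := hf
    obtain ⟨r, hpb⟩ := hp
    exact ⟨p, r, hpb⟩
  obtain ⟨r₀, hr₀pos, hr₀r⟩ : ∃ r₀ : NNReal, 0 < r₀ ∧ (r₀ : ENNReal) < r := by
    obtain ⟨r₀, h1, h2⟩ := ENNReal.lt_iff_exists_nnreal_btwn.mp hpb.r_pos
    exact ⟨r₀, by exact_mod_cast h1, h2⟩
  have hrad : (r₀ : ENNReal) < p.radius := lt_of_lt_of_le hr₀r hpb.r_le
  obtain ⟨C₀, hC₀pos, hC₀⟩ := p.norm_mul_pow_le_of_lt_radius hrad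
  set q : FormalMultilinearSeries ℂ (Fin d → ℂ) (Fin d → ℂ) := fun n => lift n (p n) with hq
  set rq : NNReal := r₀ / (d : NNReal) with hrq
  have hrqpos : 0 < rq := by
    have h1 : (0:ℝ) < (r₀:ℝ) := hr₀pos
    have h2 : (0:ℝ) < (d:ℝ) := by exact_mod_cast hd
    have : (0:ℝ) < (rq:ℝ) := by rw [hrq, NNReal.coe_div]; exact div_pos h1 (by exact_mod_cast hd)
    exact_mod_cast this
  have hrqr₀ : (rq:ℝ) ≤ (r₀:ℝ) := by
    rw [hrq, NNReal.coe_div]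
    apply div_le_self (by positivity)
    exact_mod_cast hd
  have hqbound : ∀ n, ‖q n‖ * (rq:ℝ)^n ≤ C₀ := by
    intro n
    have h1 : ‖q n‖ ≤ (d:ℝ)^n * ‖p n‖ := lift_norm_le n (p n)
    have h2 : ((d:ℝ)^n * ‖p n‖) * (rq:ℝ)^n = ‖p n‖ * (r₀:ℝ)^n := by
      rw [hrq, NNReal.coe_div, NNReal.coe_natCast]
      have hd' : (0:ℝ) < (d:ℝ) := by exact_mod_cast hd
      field_simp
      have hdd : (d:ℝ)^n * ((d:ℝ)⁻¹)^n = 1 := by rw [← mul_pow, mul_inv_cancel₀ hd'.ne', one_pow]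
      linear_combination (‖p n‖ * (r₀:ℝ)^n) * hdd
    calc ‖q n‖ * (rq:ℝ)^n ≤ ((d:ℝ)^n * ‖p n‖) * (rq:ℝ)^n := by
          apply mul_le_mul_of_nonneg_right h1 (by positivity)
      _ = ‖p n‖ * (r₀:ℝ)^n := h2
      _ ≤ C₀ := hC₀ n
  have hqrad : (rq : ENNReal) ≤ q.radius := q.le_radius_of_bound C₀ hqbound
  have hqradpos : 0 < q.radius := lt_of_lt_of_le (by exact_mod_cast hrqpos) hqrad
  have hsum := q.hasFPowerSeriesOnBall hqradpos
  refine ⟨(rq:ℝ), by exact_mod_cast hrqpos, fun z => q.sum (z - jC d y₀), ?_, ?_⟩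
  · intro z hz
    have hmem : z - jC d y₀ ∈ Metric.eball (0 : Fin d → ℂ) q.radius := by
      rw [Metric.mem_eball, edist_zero_right]
      calc (‖z - jC d y₀‖₊ : ENNReal) < (rq : ENNReal) := by
            rw [ENNReal.coe_lt_coe, ← NNReal.coe_lt_coe, coe_nnnorm]
            simpa [dist_eq_norm] using hz
        _ ≤ q.radius := hqrad
    have h2 : AnalyticAt ℂ (fun w : Fin d → ℂ => w - jC d y₀) z :=
      (analyticAt_id).sub analyticAt_const
    have h1 : AnalyticAt ℂ q.sum ((fun w : Fin d → ℂ => w - jC d y₀) z) :=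
      hsum.analyticOnNhd _ hmem
    exact AnalyticAt.comp (f := fun w : Fin d → ℂ => w - jC d y₀) h1 h2
  · intro x hx
    have hxr : x - y₀ ∈ Metric.eball (0 : Fin d → ℝ) r := by
      rw [Metric.mem_eball, edist_zero_right]
      calc (‖x - y₀‖₊ : ENNReal) < (r₀ : ENNReal) := by
            rw [ENNReal.coe_lt_coe, ← NNReal.coe_lt_coe, coe_nnnorm]
            exact lt_of_lt_of_le hx hrqr₀
        _ < r := hr₀r
    have hsumf : HasSum (fun n => p n fun _ => x - y₀) (f (y₀ + (x - y₀))) := hpb.hasSum hxr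
    have hsumf' : HasSum (fun n => jC d (p n fun _ => x - y₀)) (jC d (f x)) := by
      simpa using (jC d).hasSum hsumf
    have hterm : ∀ n, jC d (p n fun _ => x - y₀) = q n fun _ => jC d (x - y₀) := by
      intro n
      rw [← lift_agree n (p n) (fun _ => x - y₀)]
    have : HasSum (fun n => q n fun _ => jC d (x - y₀)) (jC d (f x)) := by
      simpa [hterm] using hsumf'
    have heq : q.sum (jC d (x - y₀)) = jC d (f x) := this.tsum_eq
    show q.sum (jC d x - jC d y₀) = jC d (f x)
    rw [← map_sub]
    exact heq
lemma path_mem {τ₀c ζ : ℂ} {δ : ℝ} (hζ : ζ ∈ ball τ₀c δ) {s : ℝ} (hs : s ∈ Icc (0:ℝ) 1) :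
    τ₀c + (s:ℂ) * (ζ - τ₀c) ∈ ball τ₀c δ := by
  rw [mem_ball, dist_eq_norm, add_sub_cancel_left, norm_mul, Complex.norm_real]
  rw [mem_ball, dist_eq_norm] at hζ
  calc ‖s‖ * ‖ζ - τ₀c‖ ≤ 1 * ‖ζ - τ₀c‖ := by
        apply mul_le_mul_of_nonneg_right _ (norm_nonneg _)
        rw [Real.norm_eq_abs, abs_of_nonneg hs.1]; exact hs.2
    _ < δ := by rwa [one_mul]

lemma picard_step (F : (Fin d → ℂ) → (Fin d → ℂ)) (c : Fin d → ℂ) {ρ δ : ℝ}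
    (τ₀c : ℂ) (hFan : AnalyticOnNhd ℂ F (ball c ρ))
    (v : ℂ → (Fin d → ℂ))
    (hv_diff : DifferentiableOn ℂ v (ball τ₀c δ))
    (hv_mem : ∀ z ∈ ball τ₀c δ, v z ∈ ball c ρ) :
    ∀ ζ₀ ∈ ball τ₀c δ,
      HasDerivAt (fun ζ => c + ∫ s in (0:ℝ)..1, (ζ - τ₀c) • F (v (τ₀c + (s:ℂ) * (ζ - τ₀c))))
        (F (v ζ₀)) ζ₀ := by
  intro ζ₀ hζ₀
  set G : ℂ → (Fin d → ℂ) := fun z => F (v z) with hG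
  have hGdiff : DifferentiableOn ℂ G (ball τ₀c δ) := by
    apply DifferentiableOn.comp (fun z hz => (hFan z hz).differentiableAt.differentiableWithinAt)
      hv_diff hv_mem
  have hGanal : AnalyticOnNhd ℂ G (ball τ₀c δ) := hGdiff.analyticOnNhd isOpen_ball
  have hGcont : ContinuousOn G (ball τ₀c δ) := hGdiff.continuousOn
  have hG'cont : ContinuousOn (deriv G) (ball τ₀c δ) := (hGanal.deriv).continuousOn
  have hGat : ∀ z ∈ ball τ₀c δ, HasDerivAt G (deriv G z) z := fun z hz =>
    ((hGdiff z hz).differentiableAt (isOpen_ball.mem_nhds hz)).hasDerivAt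
  -- the compact tube
  have hδpos : 0 < δ := lt_of_le_of_lt dist_nonneg (mem_ball.mp hζ₀)
  set ε : ℝ := (δ - dist ζ₀ τ₀c) / 2 with hε
  have hεpos : 0 < ε := by
    have := mem_ball.mp hζ₀
    simp only [hε]
    linarith
  set T : Set ℂ := closedBall τ₀c (dist ζ₀ τ₀c + ε) with hT
  have hT_sub : T ⊆ ball τ₀c δ := by
    apply closedBall_subset_ball
    have := mem_ball.mp hζ₀
    simp only [hε]; linarith
  have hballε : ball ζ₀ ε ⊆ ball τ₀c δ := by
    intro z hz
    rw [mem_ball] at hz ⊢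
    calc dist z τ₀c ≤ dist z ζ₀ + dist ζ₀ τ₀c := dist_triangle _ _ _
      _ < ε + dist ζ₀ τ₀c := by linarith
      _ < δ := by simp only [hε]; linarith
  have hpathT : ∀ z ∈ ball ζ₀ ε, ∀ s ∈ Icc (0:ℝ) 1, τ₀c + (s:ℂ) * (z - τ₀c) ∈ T := by
    intro z hz s hs
    rw [hT, mem_closedBall, dist_eq_norm, add_sub_cancel_left, norm_mul, Complex.norm_real]
    have h1 : ‖z - τ₀c‖ ≤ dist ζ₀ τ₀c + ε := by
      rw [← dist_eq_norm]
      calc dist z τ₀c ≤ dist z ζ₀ + dist ζ₀ τ₀c := dist_triangle _ _ _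
        _ ≤ ε + dist ζ₀ τ₀c := by
            have := le_of_lt (mem_ball.mp hz)
            linarith
        _ = dist ζ₀ τ₀c + ε := by ring
    calc ‖s‖ * ‖z - τ₀c‖ ≤ 1 * ‖z - τ₀c‖ := by
          apply mul_le_mul_of_nonneg_right _ (norm_nonneg _)
          rw [Real.norm_eq_abs, abs_of_nonneg hs.1]; exact hs.2
      _ ≤ dist ζ₀ τ₀c + ε := by rwa [one_mul]
  -- bounds on the tube
  obtain ⟨Ca, hCa⟩ : ∃ Ca, ∀ z ∈ T, ‖G z‖ ≤ Ca :=
    (isCompact_closedBall _ _).exists_bound_of_continuousOn (hGcont.mono hT_sub)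
  obtain ⟨Cb, hCb⟩ : ∃ Cb, ∀ z ∈ T, ‖deriv G z‖ ≤ Cb :=
    (isCompact_closedBall _ _).exists_bound_of_continuousOn (hG'cont.mono hT_sub)
  -- the parametric integral
  set Φ' : ℝ → (Fin d → ℂ) := fun s =>
    G (τ₀c + (s:ℂ) * (ζ₀ - τ₀c)) + (ζ₀ - τ₀c) • ((s:ℂ) • deriv G (τ₀c + (s:ℂ) * (ζ₀ - τ₀c)))
    with hΦ'
  have hcontΦ' : ContinuousOn Φ' (Icc (0:ℝ) 1) := by
    have hpathc : Continuous (fun s : ℝ => τ₀c + (s:ℂ) * (ζ₀ - τ₀c)) :=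
      continuous_const.add (Complex.continuous_ofReal.mul continuous_const)
    have hmapsto : ∀ s ∈ Icc (0:ℝ) 1, τ₀c + (s:ℂ) * (ζ₀ - τ₀c) ∈ ball τ₀c δ := fun s hs =>
      path_mem hζ₀ hs
    apply ContinuousOn.add
    · exact (hGcont.comp hpathc.continuousOn hmapsto)
    · apply ContinuousOn.fun_smul continuousOn_const
      apply ContinuousOn.fun_smul (Complex.continuous_ofReal.continuousOn)
      exact (hG'cont.comp hpathc.continuousOn hmapsto)
  -- derivative in z of the integrand, for z in the ε-ball
  have hz_deriv : ∀ s ∈ Icc (0:ℝ) 1, ∀ z ∈ ball ζ₀ ε,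
      HasDerivAt (fun z => (z - τ₀c) • G (τ₀c + (s:ℂ) * (z - τ₀c)))
        (G (τ₀c + (s:ℂ) * (z - τ₀c)) + (z - τ₀c) • ((s:ℂ) • deriv G (τ₀c + (s:ℂ) * (z - τ₀c)))) z := by
    intro s hs z hz
    have hpz : τ₀c + (s:ℂ) * (z - τ₀c) ∈ ball τ₀c δ := path_mem (hballε hz) hs
    have hw : HasDerivAt (fun z : ℂ => τ₀c + (s:ℂ) * (z - τ₀c)) (s:ℂ) z := by
      have h1 : HasDerivAt (fun z : ℂ => z - τ₀c) 1 z := (hasDerivAt_id z).sub_const τ₀c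
      have h2 := h1.const_mul (s:ℂ)
      simpa using h2.const_add τ₀c
    have hGw := (hGat _ hpz).scomp z hw
    have hc : HasDerivAt (fun z : ℂ => z - τ₀c) 1 z := (hasDerivAt_id z).sub_const τ₀c
    have := hc.fun_smul hGw
    simpa [one_smul, add_comm] using this
  have hint_cont : ∀ z ∈ ball τ₀c δ,
      ContinuousOn (fun s : ℝ => (z - τ₀c) • G (τ₀c + (s:ℂ) * (z - τ₀c))) (Icc (0:ℝ) 1) := by
    intro z hz
    have hpathc : Continuous (fun s : ℝ => τ₀c + (s:ℂ) * (z - τ₀c)) :=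
      continuous_const.add (Complex.continuous_ofReal.mul continuous_const)
    exact continuousOn_const.fun_smul
      (hGcont.comp hpathc.continuousOn (fun s hs => path_mem hz hs))
  have huIoc : Ι (0:ℝ) 1 ⊆ Icc (0:ℝ) 1 := by
    rw [uIoc_of_le (zero_le_one)]
    exact Ioc_subset_Icc_self
  have hmeas : ∀ᶠ z in 𝓝 ζ₀, AEStronglyMeasurable
      (fun s : ℝ => (z - τ₀c) • G (τ₀c + (s:ℂ) * (z - τ₀c))) (volume.restrict (Ι (0:ℝ) 1)) := by
    filter_upwards [isOpen_ball.mem_nhds hζ₀] with z hz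
    exact ((hint_cont z hz).mono huIoc).aestronglyMeasurable measurableSet_uIoc
  have hF_int : IntervalIntegrable
      (fun s : ℝ => (ζ₀ - τ₀c) • G (τ₀c + (s:ℂ) * (ζ₀ - τ₀c))) volume 0 1 := by
    apply ContinuousOn.intervalIntegrable
    rw [uIcc_of_le (zero_le_one)]
    exact hint_cont ζ₀ hζ₀
  have hF'_meas : AEStronglyMeasurable Φ' (volume.restrict (Ι (0:ℝ) 1)) :=
    (hcontΦ'.mono huIoc).aestronglyMeasurable measurableSet_uIoc
  set bnd : ℝ := Ca + (dist ζ₀ τ₀c + ε) * Cb with hbnd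
  have h_bound : ∀ᵐ s ∂(volume : Measure ℝ), s ∈ Ι (0:ℝ) 1 → ∀ z ∈ ball ζ₀ ε,
      ‖G (τ₀c + (s:ℂ) * (z - τ₀c)) + (z - τ₀c) • ((s:ℂ) • deriv G (τ₀c + (s:ℂ) * (z - τ₀c)))‖
        ≤ bnd := by
    apply ae_of_all
    intro s hs z hz
    have hsIcc : s ∈ Icc (0:ℝ) 1 := huIoc hs
    have hpT : τ₀c + (s:ℂ) * (z - τ₀c) ∈ T := hpathT z hz s hsIcc
    have h1 : ‖G (τ₀c + (s:ℂ) * (z - τ₀c))‖ ≤ Ca := hCa _ hpT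
    have hzb : ‖z - τ₀c‖ ≤ dist ζ₀ τ₀c + ε := by
      rw [← dist_eq_norm]
      calc dist z τ₀c ≤ dist z ζ₀ + dist ζ₀ τ₀c := dist_triangle _ _ _
        _ ≤ ε + dist ζ₀ τ₀c := by
            have := le_of_lt (mem_ball.mp hz); linarith
        _ = dist ζ₀ τ₀c + ε := by ring
    have h2 : ‖(z - τ₀c) • ((s:ℂ) • deriv G (τ₀c + (s:ℂ) * (z - τ₀c)))‖
        ≤ (dist ζ₀ τ₀c + ε) * Cb := by
      rw [norm_smul, norm_smul, Complex.norm_real]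
      have hs1 : ‖s‖ ≤ 1 := by
        rw [Real.norm_eq_abs, abs_of_nonneg hsIcc.1]; exact hsIcc.2
      have hin : ‖s‖ * ‖deriv G (τ₀c + (s:ℂ) * (z - τ₀c))‖ ≤ 1 * Cb :=
        mul_le_mul hs1 (hCb _ hpT) (norm_nonneg _) zero_le_one
      calc ‖z - τ₀c‖ * (‖s‖ * ‖deriv G (τ₀c + (s:ℂ) * (z - τ₀c))‖)
          ≤ (dist ζ₀ τ₀c + ε) * (1 * Cb) := by
            apply mul_le_mul hzb hin (by positivity) (by positivity)
        _ = (dist ζ₀ τ₀c + ε) * Cb := by ring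
    calc ‖G (τ₀c + (s:ℂ) * (z - τ₀c)) + (z - τ₀c) • ((s:ℂ) • deriv G (τ₀c + (s:ℂ) * (z - τ₀c)))‖
        ≤ ‖G (τ₀c + (s:ℂ) * (z - τ₀c))‖
          + ‖(z - τ₀c) • ((s:ℂ) • deriv G (τ₀c + (s:ℂ) * (z - τ₀c)))‖ := norm_add_le _ _
      _ ≤ bnd := by rw [hbnd]; linarith
  have h_diff : ∀ᵐ s ∂(volume : Measure ℝ), s ∈ Ι (0:ℝ) 1 → ∀ z ∈ ball ζ₀ ε,
      HasDerivAt (fun z => (z - τ₀c) • G (τ₀c + (s:ℂ) * (z - τ₀c)))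
        (G (τ₀c + (s:ℂ) * (z - τ₀c)) + (z - τ₀c) • ((s:ℂ) • deriv G (τ₀c + (s:ℂ) * (z - τ₀c)))) z := by
    apply ae_of_all
    intro s hs z hz
    exact hz_deriv s (huIoc hs) z hz
  have hmain := (intervalIntegral.hasDerivAt_integral_of_dominated_loc_of_deriv_le (ball_mem_nhds ζ₀ hεpos)
    hmeas hF_int hF'_meas h_bound (intervalIntegrable_const) h_diff).2
  -- FTC: the integral of Φ' over [0,1] is G ζ₀
  have hFTC : (∫ s in (0:ℝ)..1, Φ' s) = G ζ₀ := by
    set φ : ℝ → (Fin d → ℂ) := fun s => s • G (τ₀c + (s:ℂ) * (ζ₀ - τ₀c)) with hφ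
    have hφd : ∀ s ∈ uIcc (0:ℝ) 1, HasDerivAt φ (Φ' s) s := by
      intro s hs
      rw [uIcc_of_le (zero_le_one)] at hs
      have hp : τ₀c + (s:ℂ) * (ζ₀ - τ₀c) ∈ ball τ₀c δ := path_mem hζ₀ hs
      have hpathℝ : HasDerivAt (fun s : ℝ => τ₀c + (s:ℂ) * (ζ₀ - τ₀c)) (ζ₀ - τ₀c) s := by
        simpa using ((Complex.ofRealCLM.hasDerivAt).mul_const (ζ₀ - τ₀c)).const_add τ₀c
      have hGs : HasDerivAt (fun s : ℝ => G (τ₀c + (s:ℂ) * (ζ₀ - τ₀c)))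
          ((ζ₀ - τ₀c) • deriv G (τ₀c + (s:ℂ) * (ζ₀ - τ₀c))) s := by
        have := ((hGat _ hp).hasFDerivAt.restrictScalars ℝ).comp_hasDerivAt s hpathℝ
        simpa [Function.comp_def] using this
      have := (hasDerivAt_id s).fun_smul hGs
      have heq : (1:ℝ) • G (τ₀c + (s:ℂ) * (ζ₀ - τ₀c))
            + s • ((ζ₀ - τ₀c) • deriv G (τ₀c + (s:ℂ) * (ζ₀ - τ₀c))) = Φ' s := by
        rw [one_smul, hΦ']
        congr 1
        rw [smul_comm, Complex.coe_smul]
      rw [← heq]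
      simpa [add_comm] using this
    have hφint : IntervalIntegrable Φ' volume 0 1 := by
      apply ContinuousOn.intervalIntegrable
      rw [uIcc_of_le (zero_le_one)]
      exact hcontΦ'
    have := intervalIntegral.integral_eq_sub_of_hasDerivAt hφd hφint
    rw [this, hφ]
    norm_num
  rw [show (fun s : ℝ => G (τ₀c + (s:ℂ) * (ζ₀ - τ₀c))
      + (ζ₀ - τ₀c) • ((s:ℂ) • deriv G (τ₀c + (s:ℂ) * (ζ₀ - τ₀c)))) = Φ' from rfl] at hmain
  rw [hFTC] at hmain
  exact hmain.const_add c

lemma exists_local_solution (F : (Fin d → ℂ) → (Fin d → ℂ)) (c : Fin d → ℂ) {ρ : ℝ}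
    (hρ : 0 < ρ) (hFan : AnalyticOnNhd ℂ F (ball c ρ)) (τ₀ : ℝ) :
    ∃ δ > (0:ℝ), ∃ K : NNReal, LipschitzOnWith K F (closedBall c (ρ/2)) ∧
      ∃ η : ℝ → (Fin d → ℂ),
        η τ₀ = c ∧ AnalyticAt ℝ η τ₀ ∧
        ∀ τ ∈ Ioo (τ₀ - δ) (τ₀ + δ),
          HasDerivAt η (F (η τ)) τ ∧ η τ ∈ closedBall c (ρ/2) := by
  have hcb_sub : closedBall c (ρ/2) ⊆ ball c ρ :=
    closedBall_subset_ball (by linarith)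
  have hFd : DifferentiableOn ℂ F (ball c ρ) :=
    fun z hz => (hFan z hz).differentiableAt.differentiableWithinAt
  have hFc : ContinuousOn F (ball c ρ) := hFd.continuousOn
  -- bound M on the closed ball
  obtain ⟨M, hM⟩ : ∃ M, ∀ z ∈ closedBall c (ρ/2), ‖F z‖ ≤ M :=
    (isCompact_closedBall _ _).exists_bound_of_continuousOn (hFc.mono hcb_sub)
  have hMnn : 0 ≤ M := le_trans (norm_nonneg _) (hM c (mem_closedBall_self (by linarith)))
  -- Lipschitz constant on the closed ball
  obtain ⟨K₀, hK₀⟩ : ∃ K₀, ∀ z ∈ closedBall c (ρ/2), ‖fderiv ℂ F z‖ ≤ K₀ :=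
    (isCompact_closedBall _ _).exists_bound_of_continuousOn
      ((hFan.fderiv.continuousOn).mono hcb_sub)
  set K : NNReal := ⟨max K₀ 0, le_max_right _ _⟩ with hK
  have hLip : LipschitzOnWith K F (closedBall c (ρ/2)) := by
    apply Convex.lipschitzOnWith_of_nnnorm_fderiv_le
      (fun z hz => (hFan z (hcb_sub hz)).differentiableAt)
      (fun z hz => ?_) (convex_closedBall _ _)
    have : ‖fderiv ℂ F z‖ ≤ (K : ℝ) := le_trans (hK₀ z hz) (le_max_left _ _)
    exact_mod_cast this
  -- choice of δ
  set δ : ℝ := min ((ρ/2) / (M + 1)) (1 / (2 * ((K:ℝ) + 1))) with hδ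
  have hδpos : 0 < δ := by
    apply lt_min
    · positivity
    · positivity
  have hδM : δ * M ≤ ρ / 2 := by
    have h1 : δ ≤ (ρ/2) / (M + 1) := min_le_left _ _
    have h2 : δ * M ≤ ((ρ/2)/(M+1)) * M := mul_le_mul_of_nonneg_right h1 hMnn
    calc δ * M ≤ ((ρ/2)/(M+1)) * M := h2
      _ ≤ ρ/2 := by
          rw [div_mul_eq_mul_div, div_le_iff₀ (by linarith)]
          nlinarith [hMnn, hρ]
  have hδK : δ * (K:ℝ) ≤ 1/2 := by
    have h1 : δ ≤ 1 / (2*((K:ℝ)+1)) := min_le_right _ _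
    have hKnn : (0:ℝ) ≤ (K:ℝ) := K.2
    have h2 : δ * (K:ℝ) ≤ (1 / (2*((K:ℝ)+1))) * (K:ℝ) := mul_le_mul_of_nonneg_right h1 hKnn
    calc δ * (K:ℝ) ≤ (1 / (2*((K:ℝ)+1))) * (K:ℝ) := h2
      _ ≤ 1/2 := by
          rw [div_mul_eq_mul_div, one_mul, div_le_div_iff₀ (by linarith) (by norm_num)]
          nlinarith
  set τ₀c : ℂ := (τ₀ : ℂ) with hτ₀c
  set D : Set ℂ := ball τ₀c δ with hD
  have hτ₀D : τ₀c ∈ D := mem_ball_self hδpos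
  -- Picard iterates
  set u : ℕ → ℂ → (Fin d → ℂ) := fun n => Nat.rec (fun _ => c)
    (fun _ un => fun ζ => c + ∫ s in (0:ℝ)..1, (ζ - τ₀c) • F (un (τ₀c + (s:ℂ) * (ζ - τ₀c)))) n
    with hu
  have huS : ∀ n, u (n+1) = fun ζ =>
      c + ∫ s in (0:ℝ)..1, (ζ - τ₀c) • F (u n (τ₀c + (s:ℂ) * (ζ - τ₀c))) := fun n => rfl
  have hu0 : u 0 = fun _ => c := rfl
  -- main invariant
  have hP : ∀ n, DifferentiableOn ℂ (u n) D ∧ ∀ ζ ∈ D, ‖u n ζ - c‖ ≤ δ * M := by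
    intro n
    induction n with
    | zero =>
      refine ⟨differentiableOn_const c, fun ζ hζ => ?_⟩
      rw [hu0]
      simp
      positivity
    | succ n ih =>
      obtain ⟨ihd, ihb⟩ := ih
      have hmem : ∀ z ∈ D, u n z ∈ ball c ρ := by
        intro z hz
        apply hcb_sub
        rw [mem_closedBall, dist_eq_norm]
        exact le_trans (ihb z hz) hδM
      have hstep := picard_step F c τ₀c hFan (u n) ihd hmem
      have hd1 : DifferentiableOn ℂ (u (n+1)) D := by
        rw [huS n]
        exact fun ζ hζ => ((hstep ζ hζ).differentiableAt).differentiableWithinAt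
      refine ⟨hd1, fun ζ hζ => ?_⟩
      rw [huS n]
      simp only [add_sub_cancel_left]
      have : ∀ s ∈ Ι (0:ℝ) 1, ‖(ζ - τ₀c) • F (u n (τ₀c + (s:ℂ) * (ζ - τ₀c)))‖ ≤ δ * M := by
        intro s hs
        have hsIcc : s ∈ Icc (0:ℝ) 1 := by
          rw [uIoc_of_le (zero_le_one)] at hs
          exact Ioc_subset_Icc_self hs
        have hpm : τ₀c + (s:ℂ) * (ζ - τ₀c) ∈ D := path_mem hζ hsIcc
        rw [norm_smul]
        have h1 : ‖ζ - τ₀c‖ ≤ δ := le_of_lt (by rw [← dist_eq_norm]; exact mem_ball.mp hζ)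
        have h2 : ‖F (u n (τ₀c + (s:ℂ) * (ζ - τ₀c)))‖ ≤ M := by
          apply hM
          rw [mem_closedBall, dist_eq_norm]
          exact le_trans (ihb _ hpm) hδM
        exact mul_le_mul h1 h2 (norm_nonneg _) (le_of_lt hδpos)
      calc ‖∫ s in (0:ℝ)..1, (ζ - τ₀c) • F (u n (τ₀c + (s:ℂ) * (ζ - τ₀c)))‖
          ≤ (δ * M) * |(1:ℝ) - 0| := intervalIntegral.norm_integral_le_of_norm_le_const
            (fun s hs => this s hs)
        _ = δ * M := by norm_num
  have hucb : ∀ n, ∀ z ∈ D, u n z ∈ closedBall c (ρ/2) := by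
    intro n z hz
    rw [mem_closedBall, dist_eq_norm]
    exact le_trans ((hP n).2 z hz) hδM
  have humem : ∀ n, ∀ z ∈ D, u n z ∈ ball c ρ := fun n z hz => hcb_sub (hucb n z hz)
  have hud : ∀ n, ∀ ζ ∈ D, HasDerivAt (u (n+1)) (F (u n ζ)) ζ := by
    intro n ζ hζ
    have := picard_step F c τ₀c hFan (u n) (hP n).1 (humem n) ζ hζ
    rw [huS n]
    exact this
  -- integrability of the integrands
  have hintg : ∀ n, ∀ ζ ∈ D, IntervalIntegrable
      (fun s : ℝ => (ζ - τ₀c) • F (u n (τ₀c + (s:ℂ) * (ζ - τ₀c)))) volume 0 1 := by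
    intro n ζ hζ
    apply ContinuousOn.intervalIntegrable
    rw [uIcc_of_le zero_le_one]
    have hpathc : Continuous (fun s : ℝ => τ₀c + (s:ℂ) * (ζ - τ₀c)) :=
      continuous_const.add (Complex.continuous_ofReal.mul continuous_const)
    apply continuousOn_const.fun_smul
    apply (hFc.comp ((hP n).1.continuousOn.comp hpathc.continuousOn
      (fun s hs => path_mem hζ hs)) ?_)
    intro s hs
    exact humem n _ (path_mem hζ hs)
  -- Cauchy estimates
  have hcauchy : ∀ n, ∀ ζ ∈ D, ‖u (n+1) ζ - u n ζ‖ ≤ δ * M * (1/2)^n := by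
    intro n
    induction n with
    | zero =>
      intro ζ hζ
      have := (hP 1).2 ζ hζ
      rw [hu0] at *
      simpa using this
    | succ n ih =>
      intro ζ hζ
      have hAint := hintg (n+1) ζ hζ
      have hBint := hintg n ζ hζ
      have hdiffeq : u (n+1+1) ζ - u (n+1) ζ = ∫ s in (0:ℝ)..1,
          ((ζ - τ₀c) • F (u (n+1) (τ₀c + (s:ℂ) * (ζ - τ₀c)))
            - (ζ - τ₀c) • F (u n (τ₀c + (s:ℂ) * (ζ - τ₀c)))) := by
        rw [intervalIntegral.integral_sub hAint hBint,
          congrFun (huS (n+1)) ζ, congrFun (huS n) ζ]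
        exact add_sub_add_left_eq_sub _ _ c
      rw [show u (n+1+1) ζ - u (n+1) ζ = u (n+1+1) ζ - u (n+1) ζ from rfl, hdiffeq]
      have hbound : ∀ s ∈ Ι (0:ℝ) 1,
          ‖(ζ - τ₀c) • F (u (n+1) (τ₀c + (s:ℂ) * (ζ - τ₀c)))
            - (ζ - τ₀c) • F (u n (τ₀c + (s:ℂ) * (ζ - τ₀c)))‖ ≤ δ * M * (1/2)^(n+1) := by
        intro s hs
        have hsIcc : s ∈ Icc (0:ℝ) 1 := by
          rw [uIoc_of_le zero_le_one] at hs
          exact Ioc_subset_Icc_self hs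
        have hpm : τ₀c + (s:ℂ) * (ζ - τ₀c) ∈ D := path_mem hζ hsIcc
        rw [← smul_sub, norm_smul]
        have h1 : ‖ζ - τ₀c‖ ≤ δ := le_of_lt (by rw [← dist_eq_norm]; exact mem_ball.mp hζ)
        have h2 : ‖F (u (n+1) (τ₀c + (s:ℂ) * (ζ - τ₀c)))
            - F (u n (τ₀c + (s:ℂ) * (ζ - τ₀c)))‖ ≤ (K:ℝ) * (δ * M * (1/2)^n) := by
          have := hLip.dist_le_mul _ (hucb (n+1) _ hpm) _ (hucb n _ hpm)
          rw [dist_eq_norm, dist_eq_norm] at this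
          refine le_trans this ?_
          exact mul_le_mul_of_nonneg_left (ih _ hpm) (K.2)
        calc ‖ζ - τ₀c‖ * ‖F (u (n+1) (τ₀c + (s:ℂ) * (ζ - τ₀c)))
              - F (u n (τ₀c + (s:ℂ) * (ζ - τ₀c)))‖
            ≤ δ * ((K:ℝ) * (δ * M * (1/2)^n)) :=
              mul_le_mul h1 h2 (norm_nonneg _) (le_of_lt hδpos)
          _ = (δ * (K:ℝ)) * (δ * M * (1/2)^n) := by ring
          _ ≤ (1/2) * (δ * M * (1/2)^n) := by
              apply mul_le_mul_of_nonneg_right hδK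
              positivity
          _ = δ * M * (1/2)^(n+1) := by ring
      calc ‖∫ s in (0:ℝ)..1, ((ζ - τ₀c) • F (u (n+1) (τ₀c + (s:ℂ) * (ζ - τ₀c)))
            - (ζ - τ₀c) • F (u n (τ₀c + (s:ℂ) * (ζ - τ₀c))))‖
          ≤ (δ * M * (1/2)^(n+1)) * |(1:ℝ) - 0| :=
            intervalIntegral.norm_integral_le_of_norm_le_const hbound
        _ = δ * M * (1/2)^(n+1) := by norm_num
  -- uniform convergence to the limit w
  have hsumm : Summable (fun n : ℕ => δ * M * (1/2:ℝ)^n) :=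
    (summable_geometric_of_lt_one (by norm_num) (by norm_num)).mul_left (δ * M)
  set S : ℂ → (Fin d → ℂ) := fun ζ => ∑' n, (u (n+1) ζ - u n ζ) with hS
  have hTU := tendstoUniformlyOn_tsum_nat hsumm
    (f := fun n ζ => u (n+1) ζ - u n ζ) (s := D) (fun n ζ hζ => hcauchy n ζ hζ)
  set w : ℂ → (Fin d → ℂ) := fun ζ => c + S ζ with hw
  have hUw : TendstoUniformlyOn u w atTop D := by
    rw [Metric.tendstoUniformlyOn_iff] at hTU ⊢
    intro e he
    filter_upwards [hTU e he] with N hN ζ hζ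
    have h1 := hN ζ hζ
    have hpart : ∑ n ∈ Finset.range N, (u (n+1) ζ - u n ζ) = u N ζ - c := by
      rw [Finset.sum_range_sub (f := fun n => u n ζ)]
      rw [hu0]
    rw [hpart] at h1
    have h2 : u N ζ = c + (u N ζ - c) := by abel
    have : dist (w ζ) (u N ζ) = dist (S ζ) (u N ζ - c) := by
      calc dist (w ζ) (u N ζ) = dist (c + S ζ) (c + (u N ζ - c)) := by rw [← h2]
        _ = dist (S ζ) (u N ζ - c) := dist_add_left _ _ _
    rw [this]
    exact h1
  have hTLU : TendstoLocallyUniformlyOn u w atTop D := hUw.tendstoLocallyUniformlyOn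
  have hwd : DifferentiableOn ℂ w D :=
    hTLU.differentiableOn (Eventually.of_forall fun n => (hP n).1) isOpen_ball
  have hwmem : ∀ ζ ∈ D, w ζ ∈ closedBall c (ρ/2) := by
    intro ζ hζ
    have htd : Tendsto (fun n => u n ζ) atTop (nhds (w ζ)) := hUw.tendsto_at hζ
    exact (isCompact_closedBall _ _).isClosed.mem_of_tendsto htd
      (Eventually.of_forall fun n => hucb n ζ hζ)
  have hwderiv : ∀ ζ ∈ D, HasDerivAt w (F (w ζ)) ζ := by
    intro ζ hζ
    have hTLUd := hTLU.deriv (Eventually.of_forall fun n => (hP n).1) isOpen_ball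
    have t1 : Tendsto (fun n => deriv (u n) ζ) atTop (nhds (deriv w ζ)) :=
      hTLUd.tendsto_at hζ
    have t1' : Tendsto (fun n => deriv (u (n+1)) ζ) atTop (nhds (deriv w ζ)) :=
      t1.comp (tendsto_add_atTop_nat 1)
    have hde : ∀ n, deriv (u (n+1)) ζ = F (u n ζ) := fun n => (hud n ζ hζ).deriv
    have t2 : Tendsto (fun n => F (u n ζ)) atTop (nhds (F (w ζ))) := by
      have hFca : ContinuousAt F (w ζ) :=
        ((hFan _ (hcb_sub (hwmem ζ hζ))).differentiableAt).continuousAt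
      exact hFca.tendsto.comp (hUw.tendsto_at hζ)
    have hkey : deriv w ζ = F (w ζ) := by
      apply tendsto_nhds_unique _ t2
      convert t1' using 1
      funext n
      exact (hde n).symm
    have := ((hwd ζ hζ).differentiableAt (isOpen_ball.mem_nhds hζ)).hasDerivAt
    rwa [hkey] at this
  have hu_τ₀ : ∀ n, u n τ₀c = c := by
    intro n
    induction n with
    | zero => rw [hu0]
    | succ n ih =>
      rw [huS n]
      simp
  have hwτ₀ : w τ₀c = c := by
    apply tendsto_nhds_unique (hUw.tendsto_at hτ₀D)
    simp only [hu_τ₀]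
    exact tendsto_const_nhds
  -- the real restriction
  refine ⟨δ, hδpos, K, hLip, fun τ : ℝ => w ((τ:ℂ)), hwτ₀, ?_, ?_⟩
  · -- analyticity
    have hwAnal : AnalyticAt ℂ w τ₀c :=
      hwd.analyticAt (isOpen_ball.mem_nhds hτ₀D)
    have h2 : AnalyticAt ℝ (fun τ : ℝ => (τ:ℂ)) τ₀ := Complex.ofRealCLM.analyticAt τ₀
    have h1 : AnalyticAt ℝ w ((fun τ : ℝ => (τ:ℂ)) τ₀) := hwAnal.restrictScalars
    exact h1.comp h2
  · intro τ hτ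
    have hτD : ((τ:ℂ)) ∈ D := by
      rw [hD, mem_ball, hτ₀c, dist_eq_norm, ← Complex.ofReal_sub, Complex.norm_real,
        Real.norm_eq_abs]
      rcases hτ with ⟨h1, h2⟩
      rw [abs_lt]
      constructor <;> linarith
    refine ⟨?_, hwmem _ hτD⟩
    have hd := hwderiv _ hτD
    have := (hd.hasFDerivAt.restrictScalars ℝ).comp_hasDerivAt τ
      (Complex.ofRealCLM.hasDerivAt)
    simpa [Function.comp_def] using this

/-- solutions of analytic ODEs are analytic -/
lemma analyticAt_sol (hd : 0 < d) (f : (Fin d → ℝ) → (Fin d → ℝ))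
    (hanal : ∀ x, AnalyticAt ℝ f x) (γ : ℝ → (Fin d → ℝ))
    (hγ : ∀ τ : ℝ, 0 < τ → HasDerivAt γ (f (γ τ)) τ) (τ₀ : ℝ) (hτ₀ : 0 < τ₀) :
    AnalyticAt ℝ γ τ₀ := by
  set y₀ := γ τ₀ with hy₀
  obtain ⟨ρ, hρ, F, hFan, hFagree⟩ := exists_complexification hd f y₀ (hanal y₀)
  obtain ⟨δ, hδ, K, hLip, η, hη0, hηa, hηd⟩ := exists_local_solution F (jC d y₀) hρ hFan τ₀
  have hcont : ContinuousAt γ τ₀ := (hγ τ₀ hτ₀).continuousAt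
  obtain ⟨δ', hδ'pos, hδ'⟩ : ∃ δ' > 0, ∀ τ : ℝ, dist τ τ₀ < δ' → dist (γ τ) (γ τ₀) < ρ/2 :=
    Metric.continuousAt_iff.mp hcont (ρ/2) (by linarith)
  set δ₂ : ℝ := min δ' (min δ τ₀) with hδ₂
  have hδ₂pos : 0 < δ₂ := lt_min hδ'pos (lt_min hδ hτ₀)
  have hδ₂δ : δ₂ ≤ δ := le_trans (min_le_right _ _) (min_le_left _ _)
  have hδ₂τ₀ : δ₂ ≤ τ₀ := le_trans (min_le_right _ _) (min_le_right _ _)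
  set A : ℝ → (Fin d → ℂ) := fun τ => jC d (γ τ) with hA
  have hmemA : ∀ τ ∈ Ioo (τ₀ - δ₂) (τ₀ + δ₂), γ τ ∈ ball y₀ (ρ/2) := by
    intro τ hτ
    rw [mem_ball]
    apply hδ' τ
    rw [Real.dist_eq, abs_lt]
    rcases hτ with ⟨h1, h2⟩
    constructor <;> nlinarith [le_trans (min_le_left δ' (min δ τ₀)) (le_refl δ')]
  have hAd : ∀ τ ∈ Ioo (τ₀ - δ₂) (τ₀ + δ₂),
      HasDerivAt A (F (A τ)) τ ∧ A τ ∈ closedBall (jC d y₀) (ρ/2) := by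
    intro τ hτ
    have hτpos : 0 < τ := by rcases hτ with ⟨h1, _⟩; linarith
    have hder := ((jC d).hasFDerivAt).comp_hasDerivAt τ (hγ τ hτpos)
    have hγmem : ‖γ τ - y₀‖ < ρ/2 := by
      have := hmemA τ hτ; rwa [mem_ball, dist_eq_norm] at this
    have hagree : F (jC d (γ τ)) = jC d (f (γ τ)) := hFagree _ (by linarith)
    constructor
    · rw [hA]
      simp only []
      rw [show F (jC d (γ τ)) = jC d (f (γ τ)) from hagree] at *
      exact hagree ▸ hder
    · rw [hA, mem_closedBall, dist_eq_norm, ← map_sub, norm_jC]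
      linarith
  have hBd : ∀ τ ∈ Ioo (τ₀ - δ₂) (τ₀ + δ₂),
      HasDerivAt η (F (η τ)) τ ∧ η τ ∈ closedBall (jC d y₀) (ρ/2) := by
    intro τ hτ
    apply hηd
    rcases hτ with ⟨h1, h2⟩
    constructor <;> linarith
  have heqOn : EqOn A η (Ioo (τ₀ - δ₂) (τ₀ + δ₂)) := by
    apply ODE_solution_unique_of_mem_Ioo (v := fun _ z => F z)
      (s := fun _ => closedBall (jC d y₀) (ρ/2)) (fun _ _ => hLip)
      (t₀ := τ₀) ⟨by linarith, by linarith⟩ hAd hBd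
    rw [hA, hη0]
  have hev : (fun τ => reC d (η τ)) =ᶠ[nhds τ₀] γ := by
    have hIoo : Ioo (τ₀ - δ₂) (τ₀ + δ₂) ∈ nhds τ₀ :=
      Ioo_mem_nhds (by linarith) (by linarith)
    filter_upwards [hIoo] with τ hτ
    rw [← heqOn hτ, hA]
    simp
  have hcomp : AnalyticAt ℝ (fun τ => reC d (η τ)) τ₀ := by
    have h1 : AnalyticAt ℝ (reC d) (η τ₀) := (reC d).analyticAt _
    exact h1.comp hηa
  exact hcomp.congr hev

lemma analyticAt_V {d : ℕ} (P : Matrix (Fin d) (Fin d) ℝ) (y : Fin d → ℝ) :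
    AnalyticAt ℝ (fun y : Fin d → ℝ => y ⬝ᵥ P.mulVec y) y := by
  have : (fun y : Fin d → ℝ => y ⬝ᵥ P.mulVec y)
      = fun y : Fin d → ℝ => ∑ i, y i * ∑ j, P i j * y j := by
    funext y
    simp [dotProduct, Matrix.mulVec, Finset.mul_sum]
  rw [this]
  apply Finset.analyticAt_fun_sum
  intro i _
  apply AnalyticAt.mul
  · exact (ContinuousLinearMap.proj i : (Fin d → ℝ) →L[ℝ] ℝ).analyticAt y
  · apply Finset.analyticAt_fun_sum
    intro j _
    exact analyticAt_const.mul ((ContinuousLinearMap.proj j : (Fin d → ℝ) →L[ℝ] ℝ).analyticAt y)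

end WeakLyap

end Aux

/-- Let `f` be an analytic vector field on `ℝ^d` with `f(0) = 0`,
globally asymptotically stable at the origin, and let `V(x) = xᵀPx` (`P` symmetric
positive definite) be a weak Lyapunov function for `f` (`dV(x)·f(x) ≤ 0`). Then `V`
is strictly decreasing along every nonzero solution: for `x ≠ 0` and `0 ≤ s < t`,
`V(Φ^t(x)) < V(Φ^s(x))`. -/
theorem weak_lyapunov_strictly_decreasing_along_analytic_GAS_flow
    (d : ℕ) (f : (Fin d → ℝ) → (Fin d → ℝ))
    -- f is analytic and vanishes at the origin
    (hanal : ∀ x : Fin d → ℝ, AnalyticAt ℝ f x)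
    (hzero : f 0 = 0)
    (P : Matrix (Fin d) (Fin d) ℝ) (hP : P.IsSymm) (hPpos : P.PosDef)
    -- the (forward complete) flow of f
    (Φ : (Fin d → ℝ) → ℝ → (Fin d → ℝ))
    (hΦ0 : ∀ x, Φ x 0 = x)
    (hΦ : ∀ x, ∀ t ≥ (0:ℝ), HasDerivAt (Φ x) (f (Φ x t)) t)
    -- global asymptotic stability: Lyapunov stability of the origin …
    (hstab : ∀ ε > (0:ℝ), ∃ η > (0:ℝ), ∀ x : Fin d → ℝ, ‖x‖ < η →
      ∀ t ≥ (0:ℝ), ‖Φ x t‖ < ε)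
    -- … and convergence of every solution to the origin
    (hattr : ∀ x, Tendsto (Φ x) atTop (nhds (0 : Fin d → ℝ)))
    -- V(x) = xᵀPx is a weak Lyapunov function: dV(x)·f(x) ≤ 0
    (hLyap : ∀ x : Fin d → ℝ, fderiv ℝ (fun y : Fin d → ℝ => y ⬝ᵥ P.mulVec y) x (f x) ≤ 0) :
    ∀ x : Fin d → ℝ, x ≠ 0 → ∀ s t : ℝ, 0 ≤ s → s < t →
      (Φ x t) ⬝ᵥ P.mulVec (Φ x t) < (Φ x s) ⬝ᵥ P.mulVec (Φ x s) := by
  intro x hx s t hs hst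
  by_contra hcon
  push_neg at hcon
  -- d > 0, else x = 0
  rcases Nat.eq_zero_or_pos d with hd0 | hd
  · apply hx
    funext i
    subst hd0
    exact i.elim0
  set V : (Fin d → ℝ) → ℝ := fun y => y ⬝ᵥ P.mulVec y with hV
  set γ : ℝ → (Fin d → ℝ) := Φ x with hγ
  set g : ℝ → ℝ := fun τ => V (γ τ) with hg
  have hVanal : ∀ y, AnalyticAt ℝ V y := fun y => WeakLyap.analyticAt_V P y
  have hgd : ∀ τ : ℝ, 0 ≤ τ → HasDerivAt g (fderiv ℝ V (γ τ) (f (γ τ))) τ := by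
    intro τ hτ
    exact ((hVanal (γ τ)).differentiableAt.hasFDerivAt).comp_hasDerivAt τ (hΦ x τ hτ)
  have hgc : ContinuousOn g (Ici 0) :=
    fun τ hτ => ((hgd τ hτ).continuousAt).continuousWithinAt
  have hmono : AntitoneOn g (Ici 0) := by
    apply antitoneOn_of_deriv_nonpos (convex_Ici 0) hgc
    · intro τ hτ
      rw [interior_Ici] at hτ
      exact ((hgd τ (le_of_lt hτ)).differentiableAt).differentiableWithinAt
    · intro τ hτ
      rw [interior_Ici] at hτ
      rw [(hgd τ (le_of_lt hτ)).deriv]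
      exact hLyap (γ τ)
  have hts : g t = g s := le_antisymm (hmono hs (le_trans hs (le_of_lt hst)) (le_of_lt hst)) hcon
  -- g is constant on Ioo s t
  have hconst : ∀ τ ∈ Ioo s t, g τ = g s := by
    intro τ hτ
    have h1 : g τ ≤ g s := hmono hs (le_trans hs (le_of_lt hτ.1)) (le_of_lt hτ.1)
    have h2 : g t ≤ g τ := hmono (le_trans hs (le_of_lt hτ.1)) (le_trans hs (le_of_lt hst))
      (le_of_lt hτ.2)
    rw [hts] at h2
    linarith
  -- g is analytic on (0, ∞)
  have hganal : AnalyticOnNhd ℝ g (Ioi 0) := by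
    intro τ hτ
    have hγanal : AnalyticAt ℝ γ τ :=
      WeakLyap.analyticAt_sol hd f hanal γ (fun τ' hτ' => hΦ x τ' (le_of_lt hτ')) τ hτ
    exact (hVanal (γ τ)).comp hγanal
  -- identity theorem
  have hEq : EqOn g (fun _ => g s) (Ioi 0) := by
    apply AnalyticOnNhd.eqOn_of_preconnected_of_eventuallyEq hganal
      (analyticOnNhd_const) (isPreconnected_Ioi) (z₀ := (s+t)/2)
    · rw [mem_Ioi]; linarith
    · have hIoo : Ioo s t ∈ nhds ((s+t)/2) := Ioo_mem_nhds (by linarith) (by linarith)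
      filter_upwards [hIoo] with τ hτ
      exact hconst τ hτ
  -- but g tends to 0 at infinity
  have hV0 : V 0 = 0 := by simp [hV]
  have htend : Tendsto g atTop (nhds 0) := by
    rw [← hV0]
    exact ((hVanal 0).continuousAt.tendsto).comp (hattr x)
  have htend' : Tendsto g atTop (nhds (g s)) := by
    apply Tendsto.congr' _ tendsto_const_nhds
    filter_upwards [eventually_gt_atTop (0:ℝ)] with τ hτ
    exact (hEq hτ).symm
  have hgs0 : g s = 0 := tendsto_nhds_unique htend' htend
  -- hence γ τ = 0 for all τ > 0
  have hγ0 : ∀ τ : ℝ, 0 < τ → γ τ = 0 := by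
    intro τ hτ
    by_contra hne
    have := hPpos.dotProduct_mulVec_pos hne
    have hgτ : g τ = 0 := by rw [hEq hτ, hgs0]
    rw [hg] at hgτ
    simp only [hV] at hgτ
    rw [show star (γ τ) = γ τ from rfl] at this
    rw [hgτ] at this
    exact lt_irrefl 0 this
  -- hence x = γ 0 = 0
  have hc0 : ContinuousAt γ 0 := (hΦ x 0 le_rfl).continuousAt
  have h1 : Tendsto γ (nhdsWithin 0 (Ioi 0)) (nhds (γ 0)) := hc0.continuousWithinAt
  have h2 : Tendsto γ (nhdsWithin 0 (Ioi 0)) (nhds 0) := by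
    apply Tendsto.congr' _ tendsto_const_nhds
    filter_upwards [self_mem_nhdsWithin] with τ hτ
    exact (hγ0 τ hτ).symm
  have : γ 0 = 0 := tendsto_nhds_unique h1 h2
  apply hx
  rw [← hΦ0 x, ← hγ, this]
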